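/- arXiv:1912.07733 — 2 statements merged into one kernel-verified Lean document; each statement's English description precedes it below -/
import Mathlib

section
/- Suppose geodesics in last passage percolation on Z^2 are unique. For any points u < v and u' < v', the intersection Γ_{u,v} ∩ Γ_{u',v'} is either empty or equals the geodesic Γ_{u'',v''} for some pair of points u'' ≤ v''. -/
open MeasureTheory

/-- A single up-right step in `ℤ × ℤ`. -/
def UpStep (p q : ℤ × ℤ) : Prop := q = (p.1 + 1, p.2) ∨ q = (p.1, p.2 + 1)

/-- `γ` is an up-right lattice path from `u` to `v`. -/
def IsUpRightPath (γ : List (ℤ × ℤ)) (u v : ℤ × ℤ) : Prop :=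
  γ.head? = some u ∧ γ.getLast? = some v ∧ γ.Chain' UpStep

/-- The passage time of a path: the sum of the weights of its vertices. -/
def pathWeight (ξ : ℤ × ℤ → ℝ) (γ : List (ℤ × ℤ)) : ℝ := (γ.map ξ).sum

/-- `γ` is a geodesic from `u` to `v`: an up-right path maximizing the passage time. -/
def IsGeodesic (ξ : ℤ × ℤ → ℝ) (u v : ℤ × ℤ) (γ : List (ℤ × ℤ)) : Prop :=
  IsUpRightPath γ u v ∧ ∀ γ', IsUpRightPath γ' u v → pathWeight ξ γ' ≤ pathWeight ξ γ

namespace Stmt4Aux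

lemma upStep_sum {p q : ℤ × ℤ} (h : UpStep p q) : q.1 + q.2 = p.1 + p.2 + 1 := by
  rcases h with h | h <;> subst h <;> simp <;> ring

lemma upStep_le {p q : ℤ × ℤ} (h : UpStep p q) : p ≤ q := by
  rcases h with h | h <;> subst h <;>
    exact ⟨by simp, by simp⟩

lemma chain_step {γ : List (ℤ × ℤ)} (h : γ.Chain' UpStep) {i : ℕ} (hi : i + 1 < γ.length) :
    UpStep (γ[i]'(by omega)) (γ[i+1]'hi) := by
  have := List.isChain_iff_getElem.1 h i (by omega)
  simpa [List.get_eq_getElem] using this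

lemma sum_idx {γ : List (ℤ × ℤ)} {u v : ℤ × ℤ} (h : IsUpRightPath γ u v) :
    ∀ i, (hi : i < γ.length) → (γ[i]'hi).1 + (γ[i]'hi).2 = u.1 + u.2 + i := by
  intro i
  induction i with
  | zero =>
    intro hi
    have hne : γ ≠ [] := by intro hc; rw [hc] at hi; simp at hi
    have h0 : γ.head? = some u := h.1
    rw [List.head?_eq_head hne, List.head_eq_getElem] at h0
    have : γ[0]'(by omega) = u := by injection h0
    simp [this]
  | succ n ih =>
    intro hi
    have hn : n < γ.length := by omega
    have hs := upStep_sum (chain_step h.2.2 (i := n) hi)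
    rw [hs, ih hn]
    push_cast; ring

lemma idx_mono {γ : List (ℤ × ℤ)} (h : γ.Chain' UpStep) {i j : ℕ} (hij : i ≤ j)
    (hj : j < γ.length) : γ[i]'(by omega) ≤ γ[j]'hj := by
  induction j with
  | zero =>
    have : i = 0 := by omega
    subst this; exact le_refl _
  | succ n ih =>
    rcases Nat.lt_or_ge i (n + 1) with h1 | h1
    · exact le_trans (ih (by omega) (by omega)) (upStep_le (chain_step h hj))
    · have : i = n + 1 := by omega
      subst this; exact le_refl _

lemma slice_path {γ : List (ℤ × ℤ)} (hc : γ.Chain' UpStep) {i j : ℕ} (hij : i ≤ j)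
    (hj : j < γ.length) :
    IsUpRightPath ((γ.drop i).take (j + 1 - i)) (γ[i]'(by omega)) (γ[j]'hj) := by
  set δ := (γ.drop i).take (j + 1 - i) with hδ
  have hlen : δ.length = j + 1 - i := by
    simp only [hδ, List.length_take, List.length_drop]
    omega
  have hget : ∀ k, k < j + 1 - i → δ[k]? = γ[i + k]? := by
    intro k hk
    rw [hδ, List.getElem?_take, if_pos hk, List.getElem?_drop]
  refine ⟨?_, ?_, (hc.drop i).take _⟩
  · rw [List.head?_eq_getElem?, hget 0 (by omega), List.getElem?_eq_getElem (h := by omega)]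
    simp
  · rw [List.getLast?_eq_getElem?, hlen]
    have hji : j + 1 - i - 1 = j - i := by omega
    rw [hji, hget (j - i) (by omega), show i + (j - i) = j by omega,
      List.getElem?_eq_getElem hj]

lemma splice_path {σ δ τ δ' : List (ℤ × ℤ)} {u v a b : ℤ × ℤ}
    (h : IsUpRightPath (σ ++ δ ++ τ) u v) (hδ : IsUpRightPath δ a b)
    (hδ' : IsUpRightPath δ' a b) : IsUpRightPath (σ ++ δ' ++ τ) u v := by
  obtain ⟨h1, h2, h3⟩ := h
  obtain ⟨d1, d2, _⟩ := hδ
  obtain ⟨e1, e2, e3⟩ := hδ'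
  refine ⟨?_, ?_, ?_⟩
  · rw [List.append_assoc] at h1 ⊢
    rw [List.head?_append, List.head?_append, d1] at h1
    rw [List.head?_append, List.head?_append, e1]
    exact h1
  · rw [List.getLast?_append, List.getLast?_append, d2] at h2
    rw [List.getLast?_append, List.getLast?_append, e2]
    exact h2
  · simp only [List.Chain'] at h3 e3 ⊢
    rw [List.append_assoc, List.isChain_append, List.isChain_append] at h3 ⊢
    refine ⟨h3.1, ⟨e3, h3.2.1.2.1, ?_⟩, ?_⟩
    · intro x hx y hy
      refine h3.2.1.2.2 x ?_ y hy
      rw [e2] at hx; rw [d2]; exact hx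
    · intro x hx y hy
      refine h3.2.2 x hx y ?_
      rw [List.head?_append, e1] at hy
      rw [List.head?_append, d1]
      exact hy

lemma weight_append (ξ : ℤ × ℤ → ℝ) (l1 l2 l3 : List (ℤ × ℤ)) :
    pathWeight ξ (l1 ++ l2 ++ l3) = pathWeight ξ l1 + pathWeight ξ l2 + pathWeight ξ l3 := by
  simp [pathWeight]; ring

lemma slice_geodesic {ξ : ℤ × ℤ → ℝ} {γ : List (ℤ × ℤ)} {u v : ℤ × ℤ}
    (hg : IsGeodesic ξ u v γ) {i j : ℕ} (hij : i ≤ j) (hj : j < γ.length) :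
    IsGeodesic ξ (γ[i]'(by omega)) (γ[j]'hj) ((γ.drop i).take (j + 1 - i)) := by
  have hδ := slice_path hg.1.2.2 hij hj
  refine ⟨hδ, ?_⟩
  intro δ' hδ'
  have hsplit : γ = γ.take i ++ (γ.drop i).take (j + 1 - i) ++ γ.drop (j + 1) := by
    rw [List.append_assoc]
    conv_lhs => rw [← List.take_append_drop i γ]
    congr 1
    conv_lhs => rw [← List.take_append_drop (j + 1 - i) (γ.drop i)]
    congr 1
    rw [List.drop_drop]
    congr 1
    omega
  have hρ : IsUpRightPath (γ.take i ++ δ' ++ γ.drop (j + 1)) u v :=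
    splice_path (by rw [← hsplit]; exact hg.1) hδ hδ'
  have hle := hg.2 _ hρ
  rw [weight_append] at hle
  have h2 : pathWeight ξ γ = pathWeight ξ (γ.take i) +
      pathWeight ξ ((γ.drop i).take (j + 1 - i)) + pathWeight ξ (γ.drop (j + 1)) := by
    conv_lhs => rw [hsplit]
    rw [weight_append]
  rw [h2] at hle
  linarith

end Stmt4Aux

open Stmt4Aux in
/-- The intersection of two geodesics is empty or is itself a geodesic. -/
theorem stmt4 (ξ : ℤ × ℤ → ℝ) (Γ : ℤ × ℤ → ℤ × ℤ → List (ℤ × ℤ))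
    (hΓ : ∀ u v : ℤ × ℤ, u ≤ v → IsGeodesic ξ u v (Γ u v))
    (huniq : ∀ u v : ℤ × ℤ, u ≤ v → ∀ γ, IsGeodesic ξ u v γ → γ = Γ u v)
    (u v u' v' : ℤ × ℤ) (huv : u < v) (hu'v' : u' < v') :
    {w : ℤ × ℤ | w ∈ Γ u v} ∩ {w : ℤ × ℤ | w ∈ Γ u' v'} = ∅ ∨
      ∃ u'' v'' : ℤ × ℤ, u'' ≤ v'' ∧
        {w : ℤ × ℤ | w ∈ Γ u v} ∩ {w : ℤ × ℤ | w ∈ Γ u' v'} = {w : ℤ × ℤ | w ∈ Γ u'' v''} := by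
  classical
  by_cases hne : {w : ℤ × ℤ | w ∈ Γ u v} ∩ {w : ℤ × ℤ | w ∈ Γ u' v'} = ∅
  · exact Or.inl hne
  right
  obtain ⟨w₀, hw₀⟩ := Set.nonempty_iff_ne_empty.2 hne
  have hg₁ := hΓ u v (le_of_lt huv)
  have hg₂ := hΓ u' v' (le_of_lt hu'v')
  set γ₁ := Γ u v with hγ₁
  set γ₂ := Γ u' v' with hγ₂
  set S : Finset ℕ :=
    (Finset.range γ₁.length).filter (fun i => γ₁.getD i (0, 0) ∈ γ₂) with hS
  have hmemS : ∀ i (hi : i < γ₁.length), (i ∈ S ↔ γ₁[i]'hi ∈ γ₂) := by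
    intro i hi
    rw [hS, Finset.mem_filter, Finset.mem_range, List.getD_eq_getElem _ _ hi]
    exact ⟨fun h => h.2, fun h => ⟨hi, h⟩⟩
  have hSne : S.Nonempty := by
    obtain ⟨k, hk, hkw⟩ := List.mem_iff_getElem.1 hw₀.1
    exact ⟨k, (hmemS k hk).2 (by rw [hkw]; exact hw₀.2)⟩
  set i₀ := S.min' hSne with hi₀
  set j₀ := S.max' hSne with hj₀
  have hi₀S : i₀ ∈ S := S.min'_mem hSne
  have hj₀S : j₀ ∈ S := S.max'_mem hSne
  have hij : i₀ ≤ j₀ := S.min'_le _ hj₀S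
  have hj₀len : j₀ < γ₁.length := by
    have := hj₀S
    rw [hS, Finset.mem_filter, Finset.mem_range] at this
    exact this.1
  have hi₀len : i₀ < γ₁.length := by omega
  set a := γ₁[i₀]'hi₀len with ha
  set b := γ₁[j₀]'hj₀len with hb
  have hab : a ≤ b := idx_mono hg₁.1.2.2 hij hj₀len
  have haγ₂ : a ∈ γ₂ := (hmemS i₀ hi₀len).1 hi₀S
  have hbγ₂ : b ∈ γ₂ := (hmemS j₀ hj₀len).1 hj₀S
  -- slice of γ₁ is the geodesic from a to b
  have geo₁ : IsGeodesic ξ a b ((γ₁.drop i₀).take (j₀ + 1 - i₀)) :=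
    slice_geodesic hg₁ hij hj₀len
  have hΓab : (γ₁.drop i₀).take (j₀ + 1 - i₀) = Γ a b := huniq a b hab _ geo₁
  -- slice of γ₂ is also the geodesic from a to b
  obtain ⟨i₁, hi₁, hi₁a⟩ := List.mem_iff_getElem.1 haγ₂
  obtain ⟨j₁, hj₁, hj₁b⟩ := List.mem_iff_getElem.1 hbγ₂
  have hij₁ : i₁ ≤ j₁ := by
    have hsa := sum_idx hg₂.1 i₁ hi₁
    have hsb := sum_idx hg₂.1 j₁ hj₁
    rw [hi₁a] at hsa
    rw [hj₁b] at hsb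
    have h1 : a.1 ≤ b.1 := hab.1
    have h2 : a.2 ≤ b.2 := hab.2
    have : (i₁ : ℤ) ≤ (j₁ : ℤ) := by omega
    exact_mod_cast this
  have geo₂ : IsGeodesic ξ a b ((γ₂.drop i₁).take (j₁ + 1 - i₁)) := by
    have := slice_geodesic hg₂ hij₁ hj₁
    rwa [hi₁a, hj₁b] at this
  have hΓab₂ : (γ₂.drop i₁).take (j₁ + 1 - i₁) = Γ a b := huniq a b hab _ geo₂
  refine ⟨a, b, hab, ?_⟩
  ext w
  simp only [Set.mem_inter_iff, Set.mem_setOf_eq]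
  constructor
  · rintro ⟨hw₁, hw₂⟩
    obtain ⟨k, hk, hkw⟩ := List.mem_iff_getElem.1 hw₁
    have hkS : k ∈ S := (hmemS k hk).2 (by rw [hkw]; exact hw₂)
    have hk₀ : i₀ ≤ k := S.min'_le _ hkS
    have hk₁ : k ≤ j₀ := S.le_max' _ hkS
    rw [← hΓab]
    rw [List.mem_iff_getElem]
    refine ⟨k - i₀, ?_, ?_⟩
    · simp only [List.length_take, List.length_drop]
      omega
    · have hki : k - i₀ < ((γ₁.drop i₀).take (j₀ + 1 - i₀)).length := by
        simp only [List.length_take, List.length_drop]; omega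
      have : ((γ₁.drop i₀).take (j₀ + 1 - i₀))[k - i₀]'hki = γ₁[i₀ + (k - i₀)]'(by omega) := by
        rw [List.getElem_take, List.getElem_drop]
      have hidx : γ₁[i₀ + (k - i₀)]'(by omega) = γ₁[k]'hk := by
        congr 1
        omega
      rw [this, hidx, hkw]
  · intro hw
    constructor
    · rw [← hΓab] at hw
      exact List.mem_of_mem_drop (List.mem_of_mem_take hw)
    · rw [← hΓab₂] at hw
      exact List.mem_of_mem_drop (List.mem_of_mem_take hw)
end

section
/- Suppose geodesics are unique and let u, v, v' < n in Z^2 with v ⪯ u ⪯ v' (where p ⪯ q means p_1 ≤ q_1 and p_2 ≥ q_2). Then d(C^{v, v'; n}) = max{ d(C^{u, v; n}), d(C^{u, v'; n}) }, where C^{a,b;w} denotes the first coalescence point of Γ_{a,w} and Γ_{b,w} and d(p) = p_1 + p_2. -/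
open MeasureTheory

lemma upStep_facts {p q : ℤ × ℤ} (h : UpStep p q) :
    q.1 + q.2 = p.1 + p.2 + 1 ∧ p.1 ≤ q.1 ∧ q.1 ≤ p.1 + 1 ∧ p.2 ≤ q.2 := by
  rcases h with rfl | rfl <;> simp <;> omega

lemma chain_step {γ : List (ℤ × ℤ)} (c : γ.Chain' UpStep) {i : ℕ} (h : i + 1 < γ.length) :
    UpStep γ[i] γ[i+1] := by
  have := List.isChain_iff_getElem.mp c i (by omega)
  simpa [List.get_eq_getElem] using this

lemma chain_d {γ : List (ℤ × ℤ)} (c : γ.Chain' UpStep) (i : ℕ) (hi : i < γ.length) :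
    ∀ j, i ≤ j → (hj : j < γ.length) →
      γ[j].1 + γ[j].2 = γ[i].1 + γ[i].2 + (j - i : ℕ) ∧
      γ[i].1 ≤ γ[j].1 ∧ γ[i].2 ≤ γ[j].2 := by
  intro j
  induction j with
  | zero =>
    intro hij hj
    have : i = 0 := by omega
    subst this
    simp
  | succ j ih =>
    intro hij hj
    rcases Nat.lt_or_ge i (j+1) with h | h
    · have hij' : i ≤ j := by omega
      obtain ⟨e, m1, m2⟩ := ih hij' (by omega)
      obtain ⟨e2, a1, a2, a3⟩ := upStep_facts (chain_step c hj)
      refine ⟨by omega, by omega, by omega⟩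
    · have : i = j + 1 := by omega
      subst this
      simp

lemma path_len {γ : List (ℤ × ℤ)} {a w : ℤ × ℤ} (h : IsUpRightPath γ a w) : 0 < γ.length := by
  cases γ
  · simp [IsUpRightPath] at h
  · simp

lemma path_head {γ : List (ℤ × ℤ)} {a w : ℤ × ℤ} (h : IsUpRightPath γ a w)
    (hl : 0 < γ.length) : γ[0] = a := by
  have := h.1
  rw [List.head?_eq_getElem?, List.getElem?_eq_some_iff] at this
  exact this.2

lemma path_last {γ : List (ℤ × ℤ)} {a w : ℤ × ℤ} (h : IsUpRightPath γ a w)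
    (hl : γ.length - 1 < γ.length) : γ[γ.length - 1] = w := by
  have := h.2.1
  rw [List.getLast?_eq_getElem?, List.getElem?_eq_some_iff] at this
  exact this.2

/-- every vertex of a path lies between endpoints coordinatewise -/
lemma mem_le {γ : List (ℤ × ℤ)} {a w p : ℤ × ℤ} (h : IsUpRightPath γ a w) (hp : p ∈ γ) :
    a.1 ≤ p.1 ∧ a.2 ≤ p.2 ∧ p.1 ≤ w.1 ∧ p.2 ≤ w.2 := by
  obtain ⟨i, hi, rfl⟩ := List.mem_iff_getElem.mp hp
  have hl : 0 < γ.length := path_len h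
  have h0 := path_head h hl
  have hlast := path_last h (by omega)
  obtain ⟨_, b1, b2⟩ := chain_d h.2.2 0 hl i (by omega) hi
  obtain ⟨_, c1, c2⟩ := chain_d h.2.2 i hi (γ.length - 1) (by omega) (by omega)
  rw [h0] at b1 b2
  rw [hlast] at c1 c2
  exact ⟨b1, b2, c1, c2⟩

lemma pathWeight_append (ξ : ℤ × ℤ → ℝ) (l1 l2 : List (ℤ × ℤ)) :
    pathWeight ξ (l1 ++ l2) = pathWeight ξ l1 + pathWeight ξ l2 := by
  simp [pathWeight]

lemma suffix_geodesic {ξ : ℤ × ℤ → ℝ} {γ : List (ℤ × ℤ)} {a w : ℤ × ℤ}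
    (hg : IsGeodesic ξ a w γ) {i : ℕ} (hi : i < γ.length) :
    IsGeodesic ξ γ[i] w (γ.drop i) := by
  have hp := hg.1
  have hl : 0 < γ.length := path_len hp
  have hpath : IsUpRightPath (γ.drop i) γ[i] w := by
    refine ⟨?_, ?_, hp.2.2.drop i⟩
    · rw [List.head?_eq_getElem?, List.getElem?_drop]
      simp only [Nat.add_zero]
      exact List.getElem?_eq_getElem hi
    · rw [List.getLast?_eq_getElem?, List.getElem?_drop, List.length_drop]
      have : i + (γ.length - i - 1) = γ.length - 1 := by omega
      rw [this]
      have h2 := hp.2.1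
      rw [List.getLast?_eq_getElem?] at h2
      exact h2
  refine ⟨hpath, ?_⟩
  intro γ' hγ'
  rcases Nat.eq_zero_or_pos i with rfl | hipos
  · have h0 : γ[0] = a := path_head hp hl
    rw [h0] at hγ'
    simpa using hg.2 γ' hγ'
  obtain ⟨i', rfl⟩ : ∃ i', i = i' + 1 := ⟨i - 1, by omega⟩
  set i := i' + 1 with hidef
  have hγ'len : 0 < γ'.length := path_len hγ'
  have htlen : (γ.take i).length = i := by
    simp [List.length_take]; omega
  have hδ : IsUpRightPath (γ.take i ++ γ') a w := by
    refine ⟨?_, ?_, ?_⟩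
    · rw [List.head?_append]
      have h1 : (γ.take i).head? = some a := by
        rw [List.head?_eq_getElem?, List.getElem?_take, if_pos hipos,
          List.getElem?_eq_getElem hl, path_head hp hl]
      rw [h1]
      rfl
    · rw [List.getLast?_append, hγ'.2.1]
      rfl
    · apply List.isChain_append.mpr
      refine ⟨hp.2.2.take i, hγ'.2.2, ?_⟩
      intro x hx y hy
      have hxe : (γ.take i).getLast? = some (γ[i'] ) := by
        rw [List.getLast?_eq_getElem?]
        simp only [htlen]
        rw [List.getElem?_take, if_pos (by omega)]
        have : i - 1 = i' := by omega
        rw [this]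
        exact List.getElem?_eq_getElem (by omega)
      rw [hxe] at hx
      rw [hγ'.1] at hy
      simp only [Option.mem_def, Option.some.injEq] at hx hy
      subst hx
      subst hy
      exact chain_step hp.2.2 hi
  have hle := hg.2 _ hδ
  rw [pathWeight_append] at hle
  have e2 : pathWeight ξ γ = pathWeight ξ (γ.take i) + pathWeight ξ (γ.drop i) := by
    rw [← pathWeight_append, List.take_append_drop]
  linarith

section
variable {ξ : ℤ × ℤ → ℝ} {Γ : ℤ × ℤ → ℤ × ℤ → List (ℤ × ℤ)}

/-- Coalescence: once two geodesics to `nn` share a point, they share all later points. -/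
lemma coalesce (hΓ : ∀ u v : ℤ × ℤ, u ≤ v → IsGeodesic ξ u v (Γ u v))
    (huniq : ∀ u v : ℤ × ℤ, u ≤ v → ∀ γ, IsGeodesic ξ u v γ → γ = Γ u v)
    {a b nn p q : ℤ × ℤ} (ha : a ≤ nn) (hb : b ≤ nn)
    (hpa : p ∈ Γ a nn) (hpb : p ∈ Γ b nn) (hq : q ∈ Γ a nn)
    (hd : p.1 + p.2 ≤ q.1 + q.2) : q ∈ Γ b nn := by
  have ga := hΓ a nn ha
  have gb := hΓ b nn hb
  obtain ⟨i, hi, hip⟩ := List.mem_iff_getElem.mp hpa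
  obtain ⟨j, hj, hjp⟩ := List.mem_iff_getElem.mp hpb
  obtain ⟨k, hk, hkq⟩ := List.mem_iff_getElem.mp hq
  -- p ≤ nn
  have hple : p ≤ nn := by
    obtain ⟨_, _, h3, h4⟩ := mem_le ga.1 hpa
    exact Prod.le_def.mpr ⟨h3, h4⟩
  have sa := suffix_geodesic ga hi
  have sb := suffix_geodesic gb hj
  rw [hip] at sa
  rw [hjp] at sb
  have ea := huniq p nn hple _ sa
  have eb := huniq p nn hple _ sb
  -- i ≤ k since d is strictly increasing along the path
  have hik : i ≤ k := by
    by_contra hcon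
    have hki : k ≤ i := by omega
    obtain ⟨e, _, _⟩ := chain_d ga.1.2.2 k hk i hki hi
    rw [hip, hkq] at e
    omega
  have hqmem : q ∈ (Γ a nn).drop i := by
    rw [List.mem_iff_getElem]
    refine ⟨k - i, by simp [List.length_drop]; omega, ?_⟩
    rw [List.getElem_drop]
    have : i + (k - i) = k := by omega
    simp only [this]
    exact hkq
  rw [ea, ← eb] at hqmem
  exact List.mem_of_mem_drop hqmem

/-- Ordering of geodesics: if `a ⪯ b` then `Γ a nn` stays weakly left of `Γ b nn`
on every antidiagonal level. -/
lemma ordering (hΓ : ∀ u v : ℤ × ℤ, u ≤ v → IsGeodesic ξ u v (Γ u v))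
    (huniq : ∀ u v : ℤ × ℤ, u ≤ v → ∀ γ, IsGeodesic ξ u v γ → γ = Γ u v)
    {a b nn : ℤ × ℤ} (ha : a ≤ nn) (hb : b ≤ nn)
    (hab1 : a.1 ≤ b.1) (hab2 : b.2 ≤ a.2) :
    ∀ j i, (hi : i < (Γ a nn).length) → (hj : j < (Γ b nn).length) →
      (Γ a nn)[i].1 + (Γ a nn)[i].2 = (Γ b nn)[j].1 + (Γ b nn)[j].2 →
      (Γ a nn)[i].1 ≤ (Γ b nn)[j].1 := by
  have ga := hΓ a nn ha
  have gb := hΓ b nn hb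
  have hla : 0 < (Γ a nn).length := path_len ga.1
  have hlb : 0 < (Γ b nn).length := path_len gb.1
  have h0a : (Γ a nn)[0] = a := path_head ga.1 hla
  have h0b : (Γ b nn)[0] = b := path_head gb.1 hlb
  intro j
  induction j with
  | zero =>
    intro i hi hj hd
    obtain ⟨e, m1, m2⟩ := chain_d ga.1.2.2 0 hla i (by omega) hi
    rw [h0a] at m1 m2
    rw [h0b] at hd ⊢
    omega
  | succ j ih =>
    intro i hi hj hd
    cases i with
    | zero =>
      obtain ⟨e, m1, m2⟩ := chain_d gb.1.2.2 0 hlb (j+1) (by omega) hj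
      rw [h0b] at m1 m2
      rw [h0a] at hd ⊢
      omega
    | succ i =>
      obtain ⟨ea, a1, a2, a3⟩ := upStep_facts (chain_step ga.1.2.2 hi)
      obtain ⟨eb, b1, b2, b3⟩ := upStep_facts (chain_step gb.1.2.2 hj)
      have IH := ih i (by omega) (by omega) (by omega)
      rcases lt_or_eq_of_le IH with hlt | heq
      · omega
      · -- the two geodesics share the vertex, so they share the next one too
        have hpt : (Γ a nn)[i] = (Γ b nn)[j] := by
          have : (Γ a nn)[i].1 + (Γ a nn)[i].2 = (Γ b nn)[j].1 + (Γ b nn)[j].2 := by omega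
          exact Prod.ext_iff.mpr ⟨heq, by omega⟩
        have hmem : (Γ a nn)[i+1] ∈ Γ b nn := by
          refine coalesce hΓ huniq ha hb (List.getElem_mem (by omega : i < (Γ a nn).length))
            ?_ (List.getElem_mem hi) (by omega)
          rw [hpt]
          exact List.getElem_mem (by omega)
        obtain ⟨j', hj', hj'e⟩ := List.mem_iff_getElem.mp hmem
        have hjj : j' = j + 1 := by
          obtain ⟨e1, _, _⟩ := chain_d gb.1.2.2 0 hlb j' (by omega) hj'
          obtain ⟨e2, _, _⟩ := chain_d gb.1.2.2 0 hlb (j+1) (by omega) hj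
          rw [hj'e] at e1
          omega
        subst hjj
        rw [hj'e]
end



/-- If `v ⪯ u ⪯ v'`, then `d(C^{v,v';𝐧}) = max (d(C^{u,v;𝐧}), d(C^{u,v';𝐧}))`. -/
theorem stmt13 (ξ : ℤ × ℤ → ℝ) (Γ : ℤ × ℤ → ℤ × ℤ → List (ℤ × ℤ))
    (hΓ : ∀ u v : ℤ × ℤ, u ≤ v → IsGeodesic ξ u v (Γ u v))
    (huniq : ∀ u v : ℤ × ℤ, u ≤ v → ∀ γ, IsGeodesic ξ u v γ → γ = Γ u v)
    (u v v' nn : ℤ × ℤ) (hu : u < nn) (hv : v < nn) (hv' : v' < nn)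
    (hvu : v.1 ≤ u.1 ∧ u.2 ≤ v.2) (huv' : u.1 ≤ v'.1 ∧ v'.2 ≤ u.2)
    (C1 C2 C3 : ℤ × ℤ)
    (hC1a : C1 ∈ Γ v nn) (hC1b : C1 ∈ Γ v' nn)
    (hC1min : ∀ p : ℤ × ℤ, p ∈ Γ v nn → p ∈ Γ v' nn → C1.1 + C1.2 ≤ p.1 + p.2)
    (hC2a : C2 ∈ Γ u nn) (hC2b : C2 ∈ Γ v nn)
    (hC2min : ∀ p : ℤ × ℤ, p ∈ Γ u nn → p ∈ Γ v nn → C2.1 + C2.2 ≤ p.1 + p.2)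
    (hC3a : C3 ∈ Γ u nn) (hC3b : C3 ∈ Γ v' nn)
    (hC3min : ∀ p : ℤ × ℤ, p ∈ Γ u nn → p ∈ Γ v' nn → C3.1 + C3.2 ≤ p.1 + p.2) :
    C1.1 + C1.2 = max (C2.1 + C2.2) (C3.1 + C3.2) := by
  have hun : u ≤ nn := le_of_lt hu
  have hvn : v ≤ nn := le_of_lt hv
  have hv'n : v' ≤ nn := le_of_lt hv'
  have gu := hΓ u nn hun
  have gv := hΓ v nn hvn
  have gv' := hΓ v' nn hv'n
  -- Step 1: C1 lies on Γ u nn.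
  have hC1u : C1 ∈ Γ u nn := by
    -- C1 dominates u coordinatewise
    obtain ⟨d1, d2, d3, d4⟩ := mem_le gv.1 hC1a
    obtain ⟨e1, e2, _, _⟩ := mem_le gv'.1 hC1b
    -- the point of Γ u nn on the antidiagonal of C1
    have hlu : 0 < (Γ u nn).length := path_len gu.1
    have h0u : (Γ u nn)[0] = u := path_head gu.1 hlu
    have hlastu : (Γ u nn)[(Γ u nn).length - 1] = nn := path_last gu.1 (by omega)
    obtain ⟨eu, _, _⟩ := chain_d gu.1.2.2 0 hlu ((Γ u nn).length - 1) (by omega) (by omega)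
    rw [h0u, hlastu] at eu
    have hk1 : u.1 + u.2 ≤ C1.1 + C1.2 := by omega
    have hk2 : C1.1 + C1.2 ≤ nn.1 + nn.2 := by omega
    set k : ℕ := (C1.1 + C1.2 - (u.1 + u.2)).toNat with hkdef
    have hk : k < (Γ u nn).length := by omega
    obtain ⟨ek, _, _⟩ := chain_d gu.1.2.2 0 hlu k (by omega) hk
    rw [h0u] at ek
    have hdP : (Γ u nn)[k].1 + (Γ u nn)[k].2 = C1.1 + C1.2 := by omega
    obtain ⟨i1, hi1, hi1e⟩ := List.mem_iff_getElem.mp hC1a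
    obtain ⟨i2, hi2, hi2e⟩ := List.mem_iff_getElem.mp hC1b
    have o1 := ordering hΓ huniq hvn hun hvu.1 hvu.2 k i1 hi1 hk
      (by rw [hi1e]; omega)
    have o2 := ordering hΓ huniq hun hv'n huv'.1 huv'.2 i2 k hk hi2
      (by rw [hi2e]; omega)
    rw [hi1e] at o1
    rw [hi2e] at o2
    have : (Γ u nn)[k] = C1 := Prod.ext_iff.mpr ⟨by omega, by omega⟩
    rw [← this]
    exact List.getElem_mem hk
  have m2 : C2.1 + C2.2 ≤ C1.1 + C1.2 := hC2min C1 hC1u hC1a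
  have m3 : C3.1 + C3.2 ≤ C1.1 + C1.2 := hC3min C1 hC1u hC1b
  -- Step 2: the later of C2, C3 is a common point of Γ v and Γ v'.
  rcases le_total (C2.1 + C2.2) (C3.1 + C3.2) with hle | hle
  · have : C3 ∈ Γ v nn := coalesce hΓ huniq hun hvn hC2a hC2b hC3a hle
    have := hC1min C3 this hC3b
    omega
  · have : C2 ∈ Γ v' nn := coalesce hΓ huniq hun hv'n hC3a hC3b hC2a hle
    have := hC1min C2 hC2b this
    omega
end
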